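/- Let m ≥ 2 with prime factorization m = p_1^{e_1} p_2^{e_2} ⋯ p_ℓ^{e_ℓ} and let n ≥ μ(m). Then the number CP(n, m) of congruence preserving functions ℤ/nℤ → ℤ/mℤ equals Π_{i=1}^{ℓ} p_i^{(p_i + p_i^2 + ⋯ + p_i^{e_i})}. -/

import Mathlib

/-- `ulcm k` is the least common multiple of `1, 2, …, k`, with `ulcm 0 = 1`. -/
def ulcm (k : ℕ) : ℕ := (Finset.Icc 1 k).lcm id

/-- `mu m` is the largest prime power dividing `m`. -/
def mu (m : ℕ) : ℕ := m.primeFactors.sup fun p => p ^ m.factorization p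

/-- `f : ZMod n → ZMod m` is congruence preserving. -/
def CongPres (n m : ℕ) (f : ZMod n → ZMod m) : Prop :=
  ∀ d : ℕ, ∀ hd : d ∣ m, ∀ a b : ℕ, a < n → b < n → a ≡ b [MOD d] →
    ZMod.castHom hd (ZMod d) (f a) = ZMod.castHom hd (ZMod d) (f b)

/-- `CP n m` is the number of congruence preserving functions `ZMod n → ZMod m`. -/
noncomputable def CP (n m : ℕ) : ℕ := Nat.card {f : ZMod n → ZMod m // CongPres n m f}

lemma castHom_eq_iff {m d : ℕ} [NeZero m] (hd : d ∣ m) (x y : ZMod m) :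
    ZMod.castHom hd (ZMod d) x = ZMod.castHom hd (ZMod d) y ↔ x.val ≡ y.val [MOD d] := by
  rw [ZMod.castHom_apply, ZMod.castHom_apply, ← ZMod.natCast_val, ← ZMod.natCast_val,
    ZMod.natCast_eq_natCast_iff]

lemma congPres_iff {n m : ℕ} [NeZero m] (f : ZMod n → ZMod m) :
    CongPres n m f ↔ ∀ d : ℕ, d ∣ m → ∀ a b : ℕ, a < n → b < n → a ≡ b [MOD d] →
      (f a).val ≡ (f b).val [MOD d] := by
  unfold CongPres
  constructor
  · intro h d hd a b ha hb hab
    exact (castHom_eq_iff hd _ _).mp (h d hd a b ha hb hab)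
  · intro h d hd a b ha hb hab
    exact (castHom_eq_iff hd _ _).mpr (h d hd a b ha hb hab)

lemma dvd_val_sub_iff {m d : ℕ} [NeZero m] (hd : d ∣ m) (x y : ZMod m) :
    d ∣ (x - y).val ↔ x.val ≡ y.val [MOD d] := by
  rw [← castHom_eq_iff hd x y]
  constructor
  · intro h
    have h0 : ZMod.castHom hd (ZMod d) (x - y) = 0 := by
      rw [ZMod.castHom_apply, ← ZMod.natCast_val, ZMod.natCast_eq_zero_iff]
      exact h
    have := map_sub (ZMod.castHom hd (ZMod d)) x y
    rw [h0] at this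
    linear_combination (norm := ring_nf) -this
  · intro h
    rw [← ZMod.natCast_eq_zero_iff, ZMod.natCast_val, ← ZMod.castHom_apply (h := hd),
      map_sub, h, sub_self]

-- abbreviation for the exponent
def cc (p e a : ℕ) : ℕ := min e (Nat.log p a)

lemma pow_cc_pos (p e a : ℕ) : 0 < p ^ cc p e a := by
  rcases Nat.eq_zero_or_pos p with rfl | hp
  · simp [cc, Nat.log_zero_left]
  · exact Nat.pow_pos hp

lemma pow_cc_le {p e a : ℕ} (hp : 1 < p) (ha : a ≠ 0) : p ^ cc p e a ≤ a :=
  le_trans (Nat.pow_le_pow_right (le_of_lt hp) (min_le_right e _)) (Nat.pow_log_le_self p ha)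

lemma cc_le (p e a : ℕ) : cc p e a ≤ e := min_le_left _ _

def rebuild (p e : ℕ) (u : ℕ → ZMod (p ^ e)) (a : ℕ) : ZMod (p ^ e) :=
  if h : a = 0 then u 0
  else rebuild p e u (a - p ^ cc p e a) + u a
termination_by a
decreasing_by
  have := pow_cc_pos p e a
  omega

lemma rebuild_zero (p e : ℕ) (u : ℕ → ZMod (p ^ e)) : rebuild p e u 0 = u 0 := by
  rw [rebuild]; simp

lemma rebuild_succ (p e : ℕ) (u : ℕ → ZMod (p ^ e)) {a : ℕ} (ha : a ≠ 0) :
    rebuild p e u a = rebuild p e u (a - p ^ cc p e a) + u a := by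
  rw [rebuild]; simp [ha]

lemma local_to_global {p e : ℕ} (hp : 1 < p) (F : ℕ → ZMod (p ^ e))
    (H : ∀ a, a ≠ 0 → (F a).val ≡ (F (a - p ^ cc p e a)).val [MOD p ^ cc p e a]) :
    ∀ a b j, j ≤ e → a ≡ b [MOD p ^ j] → (F a).val ≡ (F b).val [MOD p ^ j] := by
  have key : ∀ a, ∀ b ≤ a, ∀ j ≤ e, a ≡ b [MOD p ^ j] →
      (F a).val ≡ (F b).val [MOD p ^ j] := by
    intro a
    induction a using Nat.strong_induction_on with
    | _ a IH =>
      intro b hb j hj hab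
      rcases eq_or_lt_of_le hb with rfl | hba
      · rfl
      · have ha0 : a ≠ 0 := by omega
        have hpca : p ^ cc p e a ≤ a := pow_cc_le hp ha0
        have hprev : a - p ^ cc p e a < a := by
          have := pow_cc_pos p e a; omega
        have hj_le : j ≤ cc p e a := by
          have h1 : p ^ j ∣ a - b := (Nat.modEq_iff_dvd' (le_of_lt hba)).mp hab.symm
          have h2 : p ^ j ≤ a - b := Nat.le_of_dvd (by omega) h1
          have h3 : p ^ j ≤ a := by omega
          exact le_min hj ((Nat.le_log_iff_pow_le hp ha0).mpr h3)
        have hdvdc : p ^ j ∣ p ^ cc p e a := pow_dvd_pow p hj_le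
        have hstep : a ≡ (a - p ^ cc p e a) [MOD p ^ j] := by
          refine ((Nat.modEq_iff_dvd' (Nat.sub_le _ _)).mpr ?_).symm
          rw [Nat.sub_sub_self hpca]
          exact hdvdc
        have hF : (F a).val ≡ (F (a - p ^ cc p e a)).val [MOD p ^ j] :=
          Nat.ModEq.of_dvd hdvdc (H a ha0)
        set r := a - p ^ cc p e a with hr
        rcases le_total b r with hbr | hrb
        · exact hF.trans (IH r hprev b hbr j hj (hstep.symm.trans hab))
        · exact hF.trans (IH b hba r hrb j hj (hab.symm.trans hstep)).symm
  intro a b j hj hab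
  rcases le_total b a with h | h
  · exact key a b h j hj hab
  · exact (key b a h j hj hab.symm).symm

lemma card_dvd_val {p e : ℕ} (hp : 1 < p) {c : ℕ} (hc : c ≤ e) :
    Nat.card {x : ZMod (p ^ e) // p ^ c ∣ x.val} = p ^ (e - c) := by
  have hppos : 0 < p := by omega
  have hcpos : 0 < p ^ c := Nat.pow_pos hppos
  have hecpos : 0 < p ^ (e - c) := Nat.pow_pos hppos
  have hmul : p ^ c * p ^ (e - c) = p ^ e := by
    rw [← pow_add]; congr 1; omega
  haveI : NeZero (p ^ e) := ⟨by positivity⟩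
  refine Nat.card_eq_of_equiv_fin ⟨fun x => ⟨x.1.val / p ^ c, ?_⟩,
    fun k => ⟨((p ^ c * k : ℕ) : ZMod (p ^ e)), ?_⟩, ?_, ?_⟩
  · rw [Nat.div_lt_iff_lt_mul hcpos, mul_comm, hmul]
    exact x.1.val_lt
  · have hk : (k : ℕ) < p ^ (e - c) := k.2
    have hlt : p ^ c * (k : ℕ) < p ^ e := by
      calc p ^ c * (k : ℕ) < p ^ c * p ^ (e - c) := by
            exact (Nat.mul_lt_mul_left hcpos).mpr hk
        _ = p ^ e := hmul
    rw [ZMod.val_natCast_of_lt hlt]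
    exact Dvd.intro _ rfl
  · rintro ⟨x, hx⟩
    have h1 : p ^ c * (x.val / p ^ c) = x.val := Nat.mul_div_cancel' hx
    apply Subtype.ext
    simp only [h1]
    exact ZMod.natCast_rightInverse x
  · rintro ⟨k, hk⟩
    have hlt : p ^ c * k < p ^ e := by
      calc p ^ c * k < p ^ c * p ^ (e - c) := (Nat.mul_lt_mul_left hcpos).mpr hk
        _ = p ^ e := hmul
    apply Fin.ext
    simp only [ZMod.val_natCast_of_lt hlt]
    exact Nat.mul_div_cancel_left k hcpos

lemma sum_cc {p e n : ℕ} (hp : 1 < p) (hn : p ^ e ≤ n) :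
    ∑ a ∈ Finset.range n, (e - cc p e a) = ∑ i ∈ Finset.Icc 1 e, p ^ i := by
  have inner : ∀ a : ℕ, e - cc p e a = ((Finset.Icc 1 e).filter fun i => a < p ^ i).card := by
    intro a
    rcases eq_or_ne a 0 with rfl | ha
    · rw [Finset.filter_true_of_mem]
      · simp [cc, Nat.log_zero_right]
      · intro i _
        exact Nat.pow_pos (by omega)
    · have hiff : ∀ i ∈ Finset.Icc 1 e, (a < p ^ i ↔ Nat.log p a < i) := by
        intro i _
        exact (Nat.log_lt_iff_lt_pow hp ha).symm
      rw [Finset.filter_congr hiff]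
      have : (Finset.Icc 1 e).filter (fun i => Nat.log p a < i) =
          Finset.Icc (Nat.log p a + 1) e := by
        ext i
        simp only [Finset.mem_filter, Finset.mem_Icc]
        omega
      rw [this, Nat.card_Icc]
      simp [cc]
      omega
  calc ∑ a ∈ Finset.range n, (e - cc p e a)
      = ∑ a ∈ Finset.range n, ∑ i ∈ Finset.Icc 1 e, if a < p ^ i then 1 else 0 := by
        refine Finset.sum_congr rfl fun a _ => ?_
        rw [inner a, Finset.card_filter]
    _ = ∑ i ∈ Finset.Icc 1 e, ∑ a ∈ Finset.range n, if a < p ^ i then 1 else 0 :=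
        Finset.sum_comm
    _ = ∑ i ∈ Finset.Icc 1 e, p ^ i := by
        refine Finset.sum_congr rfl fun i hi => ?_
        rw [← Finset.card_filter]
        have hle : p ^ i ≤ n := by
          refine le_trans ?_ hn
          exact Nat.pow_le_pow_right (by omega) (Finset.mem_Icc.mp hi).2
        have : (Finset.range n).filter (fun a => a < p ^ i) = Finset.range (p ^ i) := by
          ext a
          simp only [Finset.mem_filter, Finset.mem_range]
          omega
        rw [this, Finset.card_range]

theorem card_pp (p e n : ℕ) (hp : p.Prime) (he : 1 ≤ e) (hn : p ^ e ≤ n) :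
    Nat.card {f : ZMod n → ZMod (p ^ e) // CongPres n (p ^ e) f}
      = p ^ (∑ i ∈ Finset.Icc 1 e, p ^ i) := by
  have hp1 : 1 < p := hp.one_lt
  have hq2 : 2 ≤ p ^ e := le_trans hp.two_le (Nat.le_self_pow (by omega) p)
  have hn2 : 2 ≤ n := le_trans hq2 hn
  haveI : NeZero n := ⟨by omega⟩
  haveI : NeZero (p ^ e) := ⟨by omega⟩
  -- forward membership
  have fwd_mem : ∀ (f : {f : ZMod n → ZMod (p ^ e) // CongPres n (p ^ e) f}) (a : Fin n),
      p ^ cc p e (a : ℕ) ∣ (if (a : ℕ) = 0 then f.1 (((0 : ℕ) : ZMod n)) else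
        f.1 (((a : ℕ) : ZMod n)) - f.1 ((((a : ℕ) - p ^ cc p e (a : ℕ) : ℕ)) : ZMod n)).val := by
    intro f a
    by_cases h0 : (a : ℕ) = 0
    · simp [h0, cc, Nat.log_zero_right]
    · rw [if_neg h0, dvd_val_sub_iff (pow_dvd_pow p (cc_le p e (a : ℕ)))]
      refine (congPres_iff f.1).mp f.2 _ (pow_dvd_pow p (cc_le p e (a : ℕ))) _ _ a.2 ?_ ?_
      · exact lt_of_le_of_lt (Nat.sub_le _ _) a.2
      · refine ((Nat.modEq_iff_dvd' (Nat.sub_le _ _)).mpr ?_).symm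
        rw [Nat.sub_sub_self (pow_cc_le hp1 h0)]
  -- backward membership
  have inv_cp : ∀ (t : ∀ a : Fin n, {x : ZMod (p ^ e) // p ^ cc p e (a : ℕ) ∣ x.val}),
      CongPres n (p ^ e) (fun x : ZMod n =>
        rebuild p e (fun i => if h : i < n then (t ⟨i, h⟩).1 else 0) x.val) := by
    intro t
    set u : ℕ → ZMod (p ^ e) := fun i => if h : i < n then (t ⟨i, h⟩).1 else 0 with hu_def
    have hu : ∀ i, p ^ cc p e i ∣ (u i).val := by
      intro i
      by_cases h : i < n
      · simpa [hu_def, h] using (t ⟨i, h⟩).2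
      · simp [hu_def, h]
    have H : ∀ i, i ≠ 0 →
        (rebuild p e u i).val ≡ (rebuild p e u (i - p ^ cc p e i)).val [MOD p ^ cc p e i] := by
      intro i hi
      rw [← dvd_val_sub_iff (pow_dvd_pow p (cc_le p e i)), rebuild_succ p e u hi,
        add_comm, add_sub_cancel_right]
      exact hu i
    rw [congPres_iff]
    intro d hd a b ha hb hab
    obtain ⟨j, hj, rfl⟩ := (Nat.dvd_prime_pow hp).mp hd
    simp only [ZMod.val_natCast_of_lt ha, ZMod.val_natCast_of_lt hb]
    exact local_to_global hp1 (rebuild p e u) H a b j hj hab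
  have key : {f : ZMod n → ZMod (p ^ e) // CongPres n (p ^ e) f} ≃
      ∀ a : Fin n, {x : ZMod (p ^ e) // p ^ cc p e (a : ℕ) ∣ x.val} := by
    refine ⟨fun f a => ⟨_, fwd_mem f a⟩, fun t => ⟨_, inv_cp t⟩, ?_, ?_⟩
    · intro f
      apply Subtype.ext
      funext x
      set u : ℕ → ZMod (p ^ e) := fun i => if h : i < n then
        (if (i : ℕ) = 0 then f.1 (((0 : ℕ) : ZMod n)) else
          f.1 ((i : ZMod n)) - f.1 (((i - p ^ cc p e i : ℕ)) : ZMod n)) else 0 with hu_def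
      have main : ∀ a, a < n → rebuild p e u a = f.1 ((a : ℕ) : ZMod n) := by
        intro a
        induction a using Nat.strong_induction_on with
        | _ a IH =>
          intro han
          by_cases h0 : a = 0
          · subst h0
            rw [rebuild_zero]
            simp [hu_def, show (0 : ℕ) < n by omega]
          · have hpca : p ^ cc p e a ≤ a := pow_cc_le hp1 h0
            have hprev : a - p ^ cc p e a < a := by have := pow_cc_pos p e a; omega
            rw [rebuild_succ p e u h0, IH _ hprev (by omega)]
            have : u a = f.1 ((a : ZMod n)) - f.1 (((a - p ^ cc p e a : ℕ)) : ZMod n) := by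
              simp [hu_def, han, h0]
            rw [this]
            ring
      show rebuild p e u x.val = f.1 x
      rw [main x.val x.val_lt, ZMod.natCast_val, ZMod.cast_id]
    · intro t
      funext a
      apply Subtype.ext
      obtain ⟨av, hav⟩ := a
      set u : ℕ → ZMod (p ^ e) := fun i => if h : i < n then (t ⟨i, h⟩).1 else 0 with hu_def
      show (if (av : ℕ) = 0 then rebuild p e u (((0 : ℕ) : ZMod n)).val else
        rebuild p e u ((av : ZMod n)).val
          - rebuild p e u ((((av - p ^ cc p e av : ℕ)) : ZMod n)).val) = (t ⟨av, hav⟩).1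
      by_cases h0 : av = 0
      · subst h0
        rw [if_pos rfl, ZMod.val_natCast_of_lt (by omega), rebuild_zero]
        simp [hu_def, show (0 : ℕ) < n by omega]
      · rw [if_neg h0, ZMod.val_natCast_of_lt hav,
          ZMod.val_natCast_of_lt (lt_of_le_of_lt (Nat.sub_le _ _) hav),
          rebuild_succ p e u h0, add_comm, add_sub_cancel_right]
        simp [hu_def, hav]
  rw [Nat.card_congr key, Nat.card_pi]
  have hcard : ∀ a : Fin n, Nat.card {x : ZMod (p ^ e) // p ^ cc p e (a : ℕ) ∣ x.val}
      = p ^ (e - cc p e (a : ℕ)) := fun a => card_dvd_val hp1 (min_le_left _ _)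
  rw [Finset.prod_congr rfl fun a _ => hcard a, Finset.prod_pow_eq_pow_sum]
  congr 1
  rw [Fin.sum_univ_eq_sum_range (fun a => e - cc p e a) n]
  exact sum_cc hp1 hn

theorem stmt_15 (n m : ℕ) (hm : 2 ≤ m) (hn : mu m ≤ n) :
    CP n m = ∏ p ∈ m.primeFactors, p ^ (∑ i ∈ Finset.Icc 1 (m.factorization p), p ^ i) := by
  have hm0 : m ≠ 0 := by omega
  haveI : NeZero m := ⟨hm0⟩
  set P := m.primeFactors with hP
  set qf : P → ℕ := fun p => (p : ℕ) ^ m.factorization (p : ℕ) with hqf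
  have hqdvd : ∀ p : P, qf p ∣ m := fun p => Nat.ordProj_dvd m p
  have hprime : ∀ p : P, Nat.Prime (p : ℕ) := fun p => (Nat.mem_primeFactors.mp p.2).1
  have hqne : ∀ p : P, NeZero (qf p) := fun p => ⟨pow_ne_zero _ (hprime p).ne_zero⟩
  have hcop : Pairwise (Function.onFun Nat.Coprime qf) := by
    intro p q hne
    exact Nat.Coprime.pow _ _ ((Nat.coprime_primes (hprime p) (hprime q)).mpr
      (fun h => hne (Subtype.ext h)))
  have hprod : ∏ p : P, qf p = m := by
    rw [Finset.prod_coe_sort P (fun p => p ^ m.factorization p)]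
    conv_rhs => rw [← Nat.factorization_prod_pow_eq_self hm0]
    rw [Finsupp.prod, Nat.support_factorization]
  have ε : ZMod m ≃+* ∀ p : P, ZMod (qf p) := by
    have h := ZMod.prodEquivPi qf hcop
    rwa [hprod] at h
  have hcomp : ∀ (p : P) (x : ZMod m), ε x p = ZMod.castHom (hqdvd p) (ZMod (qf p)) x := by
    intro p x
    have h : (Pi.evalRingHom (fun p : P => ZMod (qf p)) p).comp (ε : ZMod m →+* _)
        = ZMod.castHom (hqdvd p) (ZMod (qf p)) := RingHom.ext_zmod _ _
    exact RingHom.congr_fun h x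
  have e1 : ∀ (p : P) (d : ℕ), d ∣ qf p → ∀ x : ZMod m, (ε x p).val ≡ x.val [MOD d] := by
    intro p d hd x
    haveI := hqne p
    rw [hcomp p x]
    have hv : (ZMod.castHom (hqdvd p) (ZMod (qf p)) x).val = x.val % qf p := by
      rw [ZMod.castHom_apply, ← ZMod.natCast_val, ZMod.val_natCast]
    rw [hv]
    exact Nat.ModEq.of_dvd hd (Nat.mod_modEq _ _)
  have transfer : ∀ f : ZMod n → ZMod m,
      CongPres n m f ↔ ∀ p : P, CongPres n (qf p) (fun x => ε (f x) p) := by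
    intro f
    constructor
    · intro hf p
      haveI := hqne p
      rw [congPres_iff]
      intro d hd a b ha hb hab
      have hd' : d ∣ m := hd.trans (hqdvd p)
      have h1 := (congPres_iff f).mp hf d hd' a b ha hb hab
      exact ((e1 p d hd (f a)).trans h1).trans (e1 p d hd (f b)).symm
    · intro hc
      rw [congPres_iff]
      intro d hd a b ha hb hab
      have claim : ∀ pp k : ℕ, pp.Prime → pp ^ k ∣ d →
          (f a).val ≡ (f b).val [MOD pp ^ k] := by
        intro pp k hpp hpk
        rcases Nat.eq_zero_or_pos k with rfl | hk
        · simpa using Nat.modEq_one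
        · have hppd : pp ∣ m := dvd_trans (dvd_trans (dvd_pow_self pp (by omega)) hpk) hd
          have hmem : pp ∈ P := Nat.mem_primeFactors.mpr ⟨hpp, hppd, hm0⟩
          have hkle : k ≤ m.factorization pp :=
            (hpp.pow_dvd_iff_le_factorization hm0).mp (hpk.trans hd)
          have hdvdq : pp ^ k ∣ qf ⟨pp, hmem⟩ := pow_dvd_pow pp hkle
          haveI := hqne ⟨pp, hmem⟩
          have h2 := (congPres_iff _).mp (hc ⟨pp, hmem⟩) (pp ^ k) hdvdq a b ha hb
            (Nat.ModEq.of_dvd hpk hab)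
          exact ((e1 ⟨pp, hmem⟩ (pp ^ k) hdvdq (f a)).symm.trans h2).trans
            (e1 ⟨pp, hmem⟩ (pp ^ k) hdvdq (f b))
      rw [Nat.modEq_iff_dvd, Int.natCast_dvd]
      refine (Nat.dvd_iff_prime_pow_dvd_dvd _ d).mpr ?_
      intro pp k hpp hpkd
      have h3 := claim pp k hpp hpkd
      rw [Nat.modEq_iff_dvd, Int.natCast_dvd] at h3
      exact h3
  set A : (ZMod n → ZMod m) ≃ ∀ p : P, ZMod n → ZMod (qf p) :=
    (Equiv.arrowCongr (Equiv.refl (ZMod n)) ε.toEquiv).trans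
      (Equiv.piComm (fun _ p => ZMod (qf p))) with hAdef
  have hA : ∀ (f : ZMod n → ZMod m) (p : P), A f p = fun x => ε (f x) p :=
    fun f p => rfl
  have key2 : {f : ZMod n → ZMod m // CongPres n m f} ≃
      ∀ p : P, {g : ZMod n → ZMod (qf p) // CongPres n (qf p) g} :=
    (A.subtypeEquiv (fun f => (transfer f).trans
      (forall_congr' fun p => by rw [hA f p]))).trans Equiv.subtypePiEquivPi
  rw [CP, Nat.card_congr key2, Nat.card_pi]
  rw [← Finset.prod_coe_sort P
    (fun p => p ^ (∑ i ∈ Finset.Icc 1 (m.factorization p), p ^ i))]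
  refine Finset.prod_congr rfl ?_
  intro p _
  have hp := hprime p
  have he : 1 ≤ m.factorization (p : ℕ) :=
    (hp.factorization_pos_of_dvd hm0 (Nat.mem_primeFactors.mp p.2).2.1)
  have hle : qf p ≤ n := by
    have h1 : qf p ≤ mu m := Finset.le_sup (f := fun q => q ^ m.factorization q) p.2
    exact le_trans h1 hn
  exact card_pp (p : ℕ) _ n hp he hle
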